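/- arXiv:2110.13239 — 6 statements merged into one kernel-verified Lean document; each statement's English description precedes it below -/
import Mathlib

section
/- Let d ≥ 2 be a natural number, let C ≥ 0, D ≥ 0, α ≥ 0, β ≥ 0 and k > 0 be reals, and let n ∈ ℝ. For each index i with 2 ≤ i ≤ d define G_i to be the set of vectors y : Fin d → ℝ with y j ≥ 0 for all j, y i ∈ [k, k + 2·α·C], y 1 ∈ [n − 2·α·C − k, n − k], and ∑ j, y j ∈ [n − β·D, n + β·D]. Then every vector y : Fin d → ℝ with y j ≥ 0 for all j belongs to at most (2·α·C + β·D + k)/k of the sets G_i; that is, the cardinality of { i : 2 ≤ i ≤ d and y ∈ G_i } is at most (2·α·C + β·D + k)/k. -/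
/-- Overlap condition: a nonnegative vector belongs to at most
`(2αC + βD + k)/k` of the sets `G_i`. Coordinates are indexed by `Fin d`,
with index `⟨0, _⟩` playing the role of the first coordinate "y 1" and the
indices `i ≠ ⟨0, _⟩` playing the roles of "i = 2, …, d". -/
theorem overlap_condition
    (d : ℕ) (hd : 2 ≤ d) (C D α β : ℝ) (hC : 0 ≤ C) (hD : 0 ≤ D)
    (hα : 0 ≤ α) (hβ : 0 ≤ β) (k : ℝ) (hk : 0 < k) (n : ℝ)
    (G : Fin d → Set (Fin d → ℝ))
    (hG : ∀ i : Fin d, i ≠ ⟨0, by omega⟩ → G i =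
      {y : Fin d → ℝ | (∀ j, 0 ≤ y j) ∧
        y i ∈ Set.Icc k (k + 2 * α * C) ∧
        y ⟨0, by omega⟩ ∈ Set.Icc (n - 2 * α * C - k) (n - k) ∧
        (∑ j, y j) ∈ Set.Icc (n - β * D) (n + β * D)})
    (y : Fin d → ℝ) (hy : ∀ j, 0 ≤ y j) :
    (({i : Fin d | i ≠ ⟨0, by omega⟩ ∧ y ∈ G i}.ncard : ℝ))
      ≤ (2 * α * C + β * D + k) / k := by
  classical
  set z : Fin d := ⟨0, by omega⟩ with hz
  set S : Set (Fin d) := {i : Fin d | i ≠ z ∧ y ∈ G i} with hSdef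
  have hSfin : S.Finite := Set.toFinite _
  rcases S.eq_empty_or_nonempty with h | ⟨i0, hi0ne, hi0G⟩
  · rw [h]
    simp only [Set.ncard_empty, Nat.cast_zero]
    positivity
  · rw [hG i0 hi0ne] at hi0G
    obtain ⟨-, -, hy0, hsum⟩ := hi0G
    rw [le_div_iff₀ hk]
    have key : (S.ncard : ℝ) * k ≤ ∑ i ∈ hSfin.toFinset, y i := by
      rw [Set.ncard_eq_toFinset_card _ hSfin]
      calc ((hSfin.toFinset.card : ℝ)) * k = ∑ _i ∈ hSfin.toFinset, k := by
            rw [Finset.sum_const, nsmul_eq_mul]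
        _ ≤ ∑ i ∈ hSfin.toFinset, y i := by
            apply Finset.sum_le_sum
            intro i hi
            rw [Set.Finite.mem_toFinset] at hi
            obtain ⟨hine, hiG⟩ := hi
            rw [hG i hine] at hiG
            exact hiG.2.1.1
    have hsub : hSfin.toFinset ⊆ Finset.univ.erase z := by
      intro i hi
      rw [Set.Finite.mem_toFinset] at hi
      exact Finset.mem_erase.mpr ⟨hi.1, Finset.mem_univ i⟩
    have key2 : ∑ i ∈ hSfin.toFinset, y i ≤ (∑ j, y j) - y z := by
      calc ∑ i ∈ hSfin.toFinset, y i ≤ ∑ i ∈ Finset.univ.erase z, y i :=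
            Finset.sum_le_sum_of_subset_of_nonneg hsub (fun i _ _ => hy i)
        _ = (∑ j, y j) - y z := by
            rw [Finset.sum_erase_eq_sub (Finset.mem_univ z)]
    have : (∑ j, y j) - y z ≤ (n + β * D) - (n - 2 * α * C - k) :=
      sub_le_sub hsum.2 hy0.1
    linarith
end

section
/- Let d ≥ 1, let a : Fin d → ℝ, and let a_* ≥ 0. Then there exists γ ∈ ℝ with ∑ i, max (a i − γ) 0 = a_*, and for any such γ the vector x defined by x i = max (a i − γ) 0 solves the constrained nonnegative least squares problem: for every y : Fin d → ℝ with y i ≥ 0 for all i and ∑ i, y i = a_*, one has ∑ i, (x i − a i)² ≤ ∑ i, (y i − a i)². -/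
/-- The solution to the constrained nonnegative least squares problem
`min ∑ (xᵢ - aᵢ)²` subject to `∑ xᵢ = a_*`, `xᵢ ≥ 0`, is given by
`xᵢ = max (aᵢ - γ) 0` where `γ` is chosen so that `∑ max (aᵢ - γ) 0 = a_*`. -/
theorem cnnls_solution
    (d : ℕ) (hd : 1 ≤ d) (a : Fin d → ℝ) (astar : ℝ) (hastar : 0 ≤ astar) :
    (∃ γ : ℝ, ∑ i, max (a i - γ) 0 = astar) ∧
    ∀ γ : ℝ, (∑ i, max (a i - γ) 0 = astar) →
      ∀ y : Fin d → ℝ, (∀ i, 0 ≤ y i) → (∑ i, y i) = astar →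
        ∑ i, (max (a i - γ) 0 - a i) ^ 2 ≤ ∑ i, (y i - a i) ^ 2 := by
  have i0 : Fin d := ⟨0, hd⟩
  constructor
  · set f : ℝ → ℝ := fun γ => ∑ i, max (a i - γ) 0 with hf
    have hcont : Continuous f := by
      apply continuous_finset_sum
      intro i _
      exact (continuous_const.sub continuous_id).max continuous_const
    obtain ⟨M, hM⟩ : ∃ M, ∀ i, a i ≤ M := ⟨Finset.univ.sup' ⟨i0, Finset.mem_univ _⟩ a,
      fun i => Finset.le_sup' a (Finset.mem_univ i)⟩
    have hfM : f M = 0 := Finset.sum_eq_zero fun i _ => max_eq_right (sub_nonpos.2 (hM i))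
    have hlow : astar ≤ f (a i0 - astar) := by
      calc astar = a i0 - (a i0 - astar) := by ring
      _ ≤ max (a i0 - (a i0 - astar)) 0 := le_max_left _ _
      _ ≤ f (a i0 - astar) :=
          Finset.single_le_sum (f := fun i => max (a i - (a i0 - astar)) 0)
            (fun i _ => le_max_right _ _) (Finset.mem_univ i0)
    have hIVT := intermediate_value_uIcc (a := (a i0 - astar)) (b := M) hcont.continuousOn
    have hmem : astar ∈ Set.uIcc (f (a i0 - astar)) (f M) := by
      rw [Set.mem_uIcc]; right; exact ⟨hfM ▸ hastar, hlow⟩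
    obtain ⟨γ, _, hγ⟩ := hIVT hmem
    exact ⟨γ, hγ⟩
  · intro γ hγ y hy hsy
    set x : Fin d → ℝ := fun i => max (a i - γ) 0 with hx
    have key : ∀ i, 0 ≤ (y i - x i) * (x i - a i + γ) := by
      intro i
      rcases le_or_gt (a i - γ) 0 with h | h
      · have hxi : x i = 0 := max_eq_right h
        apply mul_nonneg
        · rw [hxi]; simpa using hy i
        · rw [hxi]; linarith
      · have hxi : x i = a i - γ := max_eq_left h.le
        have hz : x i - a i + γ = 0 := by rw [hxi]; ring
        rw [hz, mul_zero]
    have hsum : ∑ i, y i = ∑ i, x i := by rw [hsy, ← hγ]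
    have hmain : (0:ℝ) ≤ ∑ i, ((y i - a i) ^ 2 - (x i - a i) ^ 2) := by
      have heq : ∑ i, ((y i - a i) ^ 2 - (x i - a i) ^ 2)
          = ∑ i, (y i - x i) ^ 2 + 2 * ∑ i, (y i - x i) * (x i - a i + γ)
            - 2 * γ * ∑ i, (y i - x i) := by
        rw [Finset.mul_sum, Finset.mul_sum, ← Finset.sum_add_distrib,
          ← Finset.sum_sub_distrib]
        exact Finset.sum_congr rfl fun i _ => by ring
      have h1 : (0:ℝ) ≤ ∑ i, (y i - x i) ^ 2 := Finset.sum_nonneg fun i _ => sq_nonneg _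
      have h2 : (0:ℝ) ≤ ∑ i, (y i - x i) * (x i - a i + γ) :=
        Finset.sum_nonneg fun i _ => key i
      have h3 : ∑ i, (y i - x i) = 0 := by
        rw [Finset.sum_sub_distrib, hsum, sub_self]
      rw [heq, h3]; nlinarith
    rw [Finset.sum_sub_distrib] at hmain
    linarith
end

section
/- Let ε > 0 and let d ≥ 1. Let Z 1, …, Z d be independent random variables on a probability space, each distributed according to the Laplace distribution with scale 1/ε. Then E[max over i of (Z i)²] ≤ (1/ε²) · ((ln d)² + 2·ln d + 2). -/
open MeasureTheory

/-- The Laplace distribution with scale `1/ε`: the measure on `ℝ` with density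
`x ↦ (ε/2) · exp (−ε·|x|)` with respect to Lebesgue measure. -/
noncomputable def laplaceMeasure (ε : ℝ) : Measure ℝ :=
  volume.withDensity fun x => ENNReal.ofReal ((ε / 2) * Real.exp (-ε * |x|))

section Aux

open Set Real Filter

private lemma integral_exp_neg_mul_Ioi_aux {ε : ℝ} (hε : 0 < ε) (a : ℝ) :
    ∫ x in Ioi a, Real.exp (-ε * x) = Real.exp (-ε * a) / ε := by
  have hderiv : ∀ x ∈ Ici a, HasDerivAt (fun x => -Real.exp (-ε * x) / ε)
      (Real.exp (-ε * x)) x := by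
    intro x _
    have h := (((hasDerivAt_id x).const_mul (-ε)).exp.neg).div_const ε
    refine h.congr_deriv ?_
    simp only [id]
    field_simp
  have htend : Tendsto (fun x => -Real.exp (-ε * x) / ε) atTop (nhds 0) := by
    have h1 : Tendsto (fun x : ℝ => ε * x) atTop atTop := tendsto_id.const_mul_atTop hε
    have h2 : Tendsto (fun x : ℝ => Real.exp (-(ε * x))) atTop (nhds 0) :=
      Real.tendsto_exp_neg_atTop_nhds_zero.comp h1
    have := (h2.neg.div_const ε)
    simpa [neg_mul] using this
  have := integral_Ioi_of_hasDerivAt_of_tendsto' hderiv (exp_neg_integrableOn_Ioi a hε) htend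
  rw [this]; field_simp; ring

private lemma hasDeriv_aux {ε : ℝ} (hε : 0 < ε) (x : ℝ) :
    HasDerivAt (fun x => -((x / ε + 1 / ε ^ 2) * Real.exp (-ε * x)))
      (x * Real.exp (-ε * x)) x := by
  have h1 : HasDerivAt (fun x : ℝ => x / ε + 1 / ε ^ 2) (1 / ε) x :=
    ((hasDerivAt_id x).div_const ε).add_const (1 / ε ^ 2)
  have h2 : HasDerivAt (fun x : ℝ => Real.exp (-ε * x)) (-ε * Real.exp (-ε * x)) x := by
    simpa [mul_comm] using ((hasDerivAt_id x).const_mul (-ε)).exp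
  have := (h1.mul h2).neg
  refine this.congr_deriv ?_
  field_simp
  ring

private lemma tendsto_aux {ε : ℝ} (hε : 0 < ε) :
    Tendsto (fun x => -((x / ε + 1 / ε ^ 2) * Real.exp (-ε * x))) atTop (nhds 0) := by
  have h1 : Tendsto (fun x : ℝ => ε * x) atTop atTop := tendsto_id.const_mul_atTop hε
  have hx : Tendsto (fun x : ℝ => (ε * x) ^ 1 * Real.exp (-(ε * x))) atTop (nhds 0) :=
    (tendsto_pow_mul_exp_neg_atTop_nhds_zero 1).comp h1
  have he : Tendsto (fun x : ℝ => Real.exp (-(ε * x))) atTop (nhds 0) :=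
    Real.tendsto_exp_neg_atTop_nhds_zero.comp h1
  have key : Tendsto (fun x : ℝ => (1 / ε ^ 2) * ((ε * x) ^ 1 * Real.exp (-(ε * x)))
      + (1 / ε ^ 2) * Real.exp (-(ε * x))) atTop (nhds 0) := by
    have h := (hx.const_mul (1 / ε ^ 2)).add (he.const_mul (1 / ε ^ 2))
    simp only [mul_zero, add_zero] at h
    exact h
  have : Tendsto (fun x : ℝ => (x / ε + 1 / ε ^ 2) * Real.exp (-ε * x)) atTop (nhds 0) := by
    convert key using 2 with x
    field_simp
  simpa using this.neg

private lemma integrableOn_mul_exp_aux {ε : ℝ} (hε : 0 < ε) {a : ℝ} (ha : 0 ≤ a) :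
    IntegrableOn (fun x => x * Real.exp (-ε * x)) (Ioi a) :=
  integrableOn_Ioi_deriv_of_nonneg' (fun x _ => hasDeriv_aux hε x)
    (fun x hx => mul_nonneg (ha.trans hx.out.le) (Real.exp_pos _).le) (tendsto_aux hε)

private lemma integral_mul_exp_neg_mul_Ioi_aux {ε : ℝ} (hε : 0 < ε) {a : ℝ} (ha : 0 ≤ a) :
    ∫ x in Ioi a, x * Real.exp (-ε * x) = (a / ε + 1 / ε ^ 2) * Real.exp (-ε * a) := by
  have := integral_Ioi_of_hasDerivAt_of_nonneg' (fun x _ => hasDeriv_aux hε x)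
    (fun x hx => mul_nonneg (ha.trans hx.out.le) (Real.exp_pos _).le) (tendsto_aux hε)
  rw [this]; ring

private lemma laplace_tail_aux {ε : ℝ} (hε : 0 < ε) {t : ℝ} (ht : 0 < t) :
    laplaceMeasure ε {x : ℝ | t < |x|} = ENNReal.ofReal (Real.exp (-ε * t)) := by
  set D : ℝ → ENNReal := fun x => ENNReal.ofReal ((ε / 2) * Real.exp (-ε * |x|)) with hD
  have hDcont : Continuous D := ENNReal.continuous_ofReal.comp (by continuity)
  have hDmeas : Measurable D := hDcont.measurable
  have hS : {x : ℝ | t < |x|} = Iio (-t) ∪ Ioi t := by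
    ext x
    simp only [mem_setOf_eq, mem_union, mem_Iio, mem_Ioi, lt_abs]
    constructor
    · rintro (h | h)
      · right; exact h
      · left; linarith
    · rintro (h | h)
      · right; linarith
      · left; exact h
  have hSmeas : MeasurableSet {x : ℝ | t < |x|} := by
    rw [hS]; exact measurableSet_Iio.union measurableSet_Ioi
  have hdisj : Disjoint (Iio (-t)) (Ioi t) := by
    apply Set.disjoint_left.mpr
    intro x hx1 hx2
    simp only [mem_Iio] at hx1
    simp only [mem_Ioi] at hx2
    linarith
  have hIoi : ∫⁻ x in Ioi t, D x = ENNReal.ofReal (Real.exp (-ε * t) / 2) := by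
    have h1 : ∫⁻ x in Ioi t, D x
        = ∫⁻ x in Ioi t, ENNReal.ofReal ((ε / 2) * Real.exp (-ε * x)) := by
      apply setLIntegral_congr_fun measurableSet_Ioi
      intro x hx
      rw [hD]
      simp only
      rw [abs_of_pos (ht.trans hx)]
    rw [h1]
    have hint : IntegrableOn (fun x => (ε / 2) * Real.exp (-ε * x)) (Ioi t) :=
      (exp_neg_integrableOn_Ioi t hε).const_mul (ε / 2)
    rw [← ofReal_integral_eq_lintegral_ofReal hint
      (Filter.Eventually.of_forall fun x => by positivity)]
    rw [integral_const_mul, integral_exp_neg_mul_Ioi_aux hε t]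
    congr 1
    field_simp
  have hIio : ∫⁻ x in Iio (-t), D x = ∫⁻ x in Ioi t, D x := by
    have hmap : Measure.map Neg.neg (volume : Measure ℝ) = volume :=
      Measure.map_neg_eq_self volume
    have hpre : (Neg.neg : ℝ → ℝ) ⁻¹' (Iio (-t)) = Ioi t := by
      ext x; simp only [mem_preimage, mem_Iio, mem_Ioi]; constructor <;> intro h <;> linarith
    calc ∫⁻ x in Iio (-t), D x
        = ∫⁻ x in Iio (-t), D x ∂(Measure.map Neg.neg volume) := by rw [hmap]
      _ = ∫⁻ x in (Neg.neg : ℝ → ℝ) ⁻¹' (Iio (-t)), D (-x) := by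
          rw [Measure.restrict_map measurable_neg measurableSet_Iio,
            lintegral_map hDmeas measurable_neg]
      _ = ∫⁻ x in Ioi t, D x := by
          rw [hpre]
          apply lintegral_congr
          intro x
          rw [hD]; simp [abs_neg]
  rw [laplaceMeasure, withDensity_apply _ hSmeas, hS,
    lintegral_union measurableSet_Ioi hdisj, hIio, hIoi, ← ENNReal.ofReal_add (by positivity)
    (by positivity)]
  congr 1
  ring

end Aux

open Set Real Filter in
theorem expected_max_sq_laplace
    (ε : ℝ) (hε : 0 < ε) (d : ℕ) (hd : 1 ≤ d)
    (Ω : Type*) [MeasurableSpace Ω] (P : Measure Ω) [IsProbabilityMeasure P]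
    (Z : Fin d → Ω → ℝ) (hmeas : ∀ i, Measurable (Z i))
    (hind : ProbabilityTheory.iIndepFun Z P)
    (hlaw : ∀ i, Measure.map (Z i) P = laplaceMeasure ε) :
    ∫ ω, (⨆ i, (Z i ω) ^ 2) ∂P ≤ (1 / ε ^ 2) * ((Real.log d) ^ 2 + 2 * Real.log d + 2) := by
  haveI : Nonempty (Fin d) := Fin.pos_iff_nonempty.mp hd
  have hd1 : (1 : ℝ) ≤ (d : ℝ) := by exact_mod_cast hd
  have hdpos : (0 : ℝ) < (d : ℝ) := lt_of_lt_of_le one_pos hd1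
  have hlog : 0 ≤ Real.log d := Real.log_nonneg hd1
  set B : ℝ := (1 / ε ^ 2) * ((Real.log d) ^ 2 + 2 * Real.log d + 2) with hB
  have hBnn : 0 ≤ B := by positivity
  set f : Ω → ℝ := fun ω => ⨆ i, |Z i ω| with hf
  have hfmeas : Measurable f := Measurable.iSup (fun i => (hmeas i).abs)
  have hfnn : ∀ ω, 0 ≤ f ω := fun ω => Real.iSup_nonneg fun i => abs_nonneg _
  set t₀ : ℝ := Real.log d / ε with ht₀def
  have ht₀ : 0 ≤ t₀ := div_nonneg hlog hε.le
  -- tail bound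
  have tail : ∀ t : ℝ, 0 < t →
      P {ω | t < f ω} ≤ ENNReal.ofReal (d * Real.exp (-ε * t)) := by
    intro t ht
    have hSmeas_t : MeasurableSet {x : ℝ | t < |x|} :=
      (isOpen_lt continuous_const continuous_abs).measurableSet
    have hsub : {ω | t < f ω} ⊆ ⋃ i, {ω | t < |Z i ω|} := by
      intro ω hω
      have hω' : t < ⨆ i, |Z i ω| := hω
      obtain ⟨i, hi⟩ := exists_lt_of_lt_ciSup hω'
      exact Set.mem_iUnion.mpr ⟨i, hi⟩
    calc P {ω | t < f ω} ≤ ∑ i, P {ω | t < |Z i ω|} :=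
          le_trans (measure_mono hsub) (measure_iUnion_fintype_le _ _)
      _ = ∑ _i : Fin d, ENNReal.ofReal (Real.exp (-ε * t)) := by
          apply Finset.sum_congr rfl
          intro i _
          have heq : {ω | t < |Z i ω|} = Z i ⁻¹' {x | t < |x|} := rfl
          rw [heq, ← Measure.map_apply (hmeas i) hSmeas_t, hlaw i, laplace_tail_aux hε ht]
      _ = ENNReal.ofReal (d * Real.exp (-ε * t)) := by
          rw [Finset.sum_const, Finset.card_univ, Fintype.card_fin, nsmul_eq_mul,
            ← ENNReal.ofReal_natCast d, ← ENNReal.ofReal_mul (Nat.cast_nonneg d)]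
  -- layer cake
  have layer : ∫⁻ ω, ENNReal.ofReal ((f ω) ^ 2) ∂P
      = ∫⁻ t in Ioi 0, P {ω | t < f ω} * ENNReal.ofReal (2 * t) := by
    have hgi : ∀ t > (0:ℝ), IntervalIntegrable (fun t : ℝ => 2 * t) volume 0 t :=
      fun t _ => (continuous_const.mul continuous_id).intervalIntegrable 0 t
    have hgnn : ∀ᵐ t ∂(volume.restrict (Ioi (0:ℝ))), 0 ≤ 2 * t :=
      ae_restrict_of_forall_mem measurableSet_Ioi fun t ht => by
        have : (0:ℝ) < t := ht
        linarith
    have key := lintegral_comp_eq_lintegral_meas_lt_mul P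
      (Filter.Eventually.of_forall hfnn) hfmeas.aemeasurable hgi hgnn
    have heval : ∀ ω, (∫ t in (0:ℝ)..f ω, 2 * t) = (f ω) ^ 2 := by
      intro ω
      rw [_root_.intervalIntegral.integral_const_mul, integral_id]
      ring
    simp_rw [heval] at key
    exact key
  -- main estimate of the layer-cake integral
  have main : ∫⁻ t in Ioi 0, P {ω | t < f ω} * ENNReal.ofReal (2 * t)
      ≤ ENNReal.ofReal B := by
    have hsplit : (Ioi (0:ℝ)) = Ioc 0 t₀ ∪ Ioi t₀ := (Ioc_union_Ioi_eq_Ioi ht₀).symm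
    have hdisj : Disjoint (Ioc (0:ℝ) t₀) (Ioi t₀) := by
      apply Set.disjoint_left.mpr
      intro x hx1 hx2
      exact absurd hx2 (not_lt.mpr hx1.2)
    rw [hsplit, lintegral_union measurableSet_Ioi hdisj]
    have part1 : ∫⁻ t in Ioc 0 t₀, P {ω | t < f ω} * ENNReal.ofReal (2 * t)
        ≤ ENNReal.ofReal (t₀ ^ 2) := by
      calc ∫⁻ t in Ioc 0 t₀, P {ω | t < f ω} * ENNReal.ofReal (2 * t)
          ≤ ∫⁻ t in Ioc 0 t₀, ENNReal.ofReal (2 * t) := by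
            apply lintegral_mono
            intro t
            calc P {ω | t < f ω} * ENNReal.ofReal (2 * t)
                ≤ 1 * ENNReal.ofReal (2 * t) := mul_le_mul_left prob_le_one _
              _ = ENNReal.ofReal (2 * t) := one_mul _
        _ = ENNReal.ofReal (∫ t in Ioc 0 t₀, 2 * t) := by
            rw [← ofReal_integral_eq_lintegral_ofReal]
            · exact (continuous_const.mul continuous_id).integrableOn_Ioc
            · exact ae_restrict_of_forall_mem measurableSet_Ioc fun t ht => by
                have : (0:ℝ) < t := ht.1
                simp only [Pi.zero_apply]
                linarith
        _ = ENNReal.ofReal (t₀ ^ 2) := by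
            rw [← _root_.intervalIntegral.integral_of_le ht₀]
            congr 1
            rw [_root_.intervalIntegral.integral_const_mul, integral_id]
            ring
    have part2 : ∫⁻ t in Ioi t₀, P {ω | t < f ω} * ENNReal.ofReal (2 * t)
        ≤ ENNReal.ofReal (2 * Real.log d / ε ^ 2 + 2 / ε ^ 2) := by
      have hexp : Real.exp (-ε * t₀) = 1 / (d : ℝ) := by
        rw [ht₀def]
        rw [show -ε * (Real.log d / ε) = -Real.log d by field_simp]
        rw [Real.exp_neg, Real.exp_log hdpos, one_div]
      calc ∫⁻ t in Ioi t₀, P {ω | t < f ω} * ENNReal.ofReal (2 * t)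
          ≤ ∫⁻ t in Ioi t₀, ENNReal.ofReal ((d : ℝ) * Real.exp (-ε * t) * (2 * t)) := by
            apply lintegral_mono_ae
            rw [ae_restrict_iff' measurableSet_Ioi]
            refine Filter.Eventually.of_forall fun t ht => ?_
            have htpos : 0 < t := lt_of_le_of_lt ht₀ ht
            calc P {ω | t < f ω} * ENNReal.ofReal (2 * t)
                ≤ ENNReal.ofReal ((d : ℝ) * Real.exp (-ε * t)) * ENNReal.ofReal (2 * t) :=
                  mul_le_mul_left (tail t htpos) _
              _ = ENNReal.ofReal ((d : ℝ) * Real.exp (-ε * t) * (2 * t)) :=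
                  (ENNReal.ofReal_mul (by positivity)).symm
        _ = ENNReal.ofReal (∫ t in Ioi t₀, (d : ℝ) * Real.exp (-ε * t) * (2 * t)) := by
            rw [← ofReal_integral_eq_lintegral_ofReal]
            · apply Integrable.congr ((integrableOn_mul_exp_aux hε ht₀).const_mul (2 * d))
              exact Filter.Eventually.of_forall fun t => by ring
            · exact ae_restrict_of_forall_mem measurableSet_Ioi fun t ht => by
                have htpos : 0 < t := lt_of_le_of_lt ht₀ ht
                simp only [Pi.zero_apply]
                positivity
        _ = ENNReal.ofReal (2 * Real.log d / ε ^ 2 + 2 / ε ^ 2) := by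
            congr 1
            have hrw : ∀ t : ℝ, (d : ℝ) * Real.exp (-ε * t) * (2 * t)
                = (2 * d) * (t * Real.exp (-ε * t)) := fun t => by ring
            simp_rw [hrw]
            rw [integral_const_mul, integral_mul_exp_neg_mul_Ioi_aux hε ht₀, hexp, ht₀def]
            field_simp
    calc (∫⁻ t in Ioc 0 t₀, P {ω | t < f ω} * ENNReal.ofReal (2 * t))
          + ∫⁻ t in Ioi t₀, P {ω | t < f ω} * ENNReal.ofReal (2 * t)
        ≤ ENNReal.ofReal (t₀ ^ 2) + ENNReal.ofReal (2 * Real.log d / ε ^ 2 + 2 / ε ^ 2) :=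
          add_le_add part1 part2
      _ = ENNReal.ofReal B := by
          rw [← ENNReal.ofReal_add (by positivity) (by positivity)]
          congr 1
          rw [ht₀def, hB]
          field_simp
          ring
  -- putting it together
  have hgm : Measurable (fun ω => ⨆ i, (Z i ω) ^ 2) :=
    Measurable.iSup (fun i => (hmeas i).pow_const 2)
  have hgnn : ∀ ω, 0 ≤ ⨆ i, (Z i ω) ^ 2 := fun ω => Real.iSup_nonneg fun i => sq_nonneg _
  have hle : ∀ ω, (⨆ i, (Z i ω) ^ 2) ≤ (f ω) ^ 2 := by
    intro ω
    apply ciSup_le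
    intro i
    have h1 : |Z i ω| ≤ f ω :=
      le_ciSup (f := fun j => |Z j ω|) (Set.finite_range _).bddAbove i
    calc (Z i ω) ^ 2 = |Z i ω| ^ 2 := (sq_abs _).symm
      _ ≤ (f ω) ^ 2 := pow_le_pow_left₀ (abs_nonneg _) h1 2
  have key : ∫⁻ ω, ENNReal.ofReal (⨆ i, (Z i ω) ^ 2) ∂P ≤ ENNReal.ofReal B := by
    calc ∫⁻ ω, ENNReal.ofReal (⨆ i, (Z i ω) ^ 2) ∂P
        ≤ ∫⁻ ω, ENNReal.ofReal ((f ω) ^ 2) ∂P :=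
          lintegral_mono fun ω => ENNReal.ofReal_le_ofReal (hle ω)
      _ = ∫⁻ t in Ioi 0, P {ω | t < f ω} * ENNReal.ofReal (2 * t) := layer
      _ ≤ ENNReal.ofReal B := main
  by_cases hint : Integrable (fun ω => ⨆ i, (Z i ω) ^ 2) P
  · rw [integral_eq_lintegral_of_nonneg_ae (Filter.Eventually.of_forall hgnn)
      hgm.aestronglyMeasurable]
    exact ENNReal.toReal_le_of_le_ofReal hBnn key
  · rw [integral_undef hint]
    exact hBnn
end

section
/- Let σ > 0 and let d ≥ 2. Let Z 1, …, Z d be independent random variables on a probability space, each distributed according to the Gaussian distribution on ℝ with mean 0 and variance σ². Then E[max over i of |Z i|] ≤ σ · (√(2·ln d) + (4/√(2·π)) · (1/(2·ln d))). -/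
open MeasureTheory ProbabilityTheory

open scoped Real Topology

private lemma aux_hasDeriv (c a : ℝ) (hc : c ≠ 0) (x : ℝ) :
    HasDerivAt (fun y => -((y - a) / c + 1 / c ^ 2) * Real.exp (-(c * (y - a))))
      ((x - a) * Real.exp (-(c * (x - a)))) x := by
  have hsub : HasDerivAt (fun y : ℝ => (y - a)) 1 x := (hasDerivAt_id x).sub_const a
  have h1 : HasDerivAt (fun y => -((y - a) / c + 1 / c ^ 2)) (-(1 / c)) x :=
    ((hsub.div_const c).add_const (1 / c ^ 2)).neg
  have hinner : HasDerivAt (fun y => -(c * (y - a))) (-c) x := by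
    simpa using (hsub.const_mul c).fun_neg
  have h2 : HasDerivAt (fun y => Real.exp (-(c * (y - a))))
      (Real.exp (-(c * (x - a))) * (-c)) x := hinner.exp
  have := h1.fun_mul h2
  refine this.congr_deriv ?_
  field_simp
  ring

private lemma aux_tendsto (c a : ℝ) (hc : 0 < c) :
    Filter.Tendsto (fun y => -((y - a) / c + 1 / c ^ 2) * Real.exp (-(c * (y - a))))
      Filter.atTop (nhds 0) := by
  have ha : Filter.Tendsto (fun u : ℝ => u * Real.exp (-u)) Filter.atTop (nhds 0) := by
    simpa using Real.tendsto_pow_mul_exp_neg_atTop_nhds_zero 1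
  have hb : Filter.Tendsto (fun u : ℝ => Real.exp (-u)) Filter.atTop (nhds 0) :=
    Real.tendsto_exp_neg_atTop_nhds_zero
  have h2 : Filter.Tendsto
      (fun u : ℝ => -(1 / c ^ 2) * (u * Real.exp (-u)) + (-(1 / c ^ 2)) * Real.exp (-u))
      Filter.atTop (nhds (-(1 / c ^ 2) * 0 + (-(1 / c ^ 2)) * 0)) :=
    (ha.const_mul _).add (hb.const_mul _)
  have h3 : Filter.Tendsto (fun y : ℝ => c * (y - a)) Filter.atTop Filter.atTop := by
    apply Filter.Tendsto.const_mul_atTop hc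
    have := Filter.tendsto_atTop_add_const_right Filter.atTop (-a) (Filter.tendsto_id (α := ℝ))
    simpa [sub_eq_add_neg] using this
  have h4 := (h2.comp h3)
  simp only [add_zero, mul_zero, zero_add] at h4
  refine h4.congr fun y => ?_
  simp only [Function.comp]
  field_simp
  ring

private lemma aux_integrableOn (c a : ℝ) (hc : 0 < c) :
    MeasureTheory.IntegrableOn (fun x => (x - a) * Real.exp (-(c * (x - a)))) (Set.Ioi a) := by
  refine integrableOn_Ioi_deriv_of_nonneg ?_ (fun x _ => aux_hasDeriv c a hc.ne' x)
    (fun x hx => ?_) (aux_tendsto c a hc)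
  · exact Continuous.continuousWithinAt (by fun_prop)
  · have : 0 ≤ x - a := by simp at hx; linarith
    positivity

private lemma aux_integral (c a : ℝ) (hc : 0 < c) :
    ∫ x in Set.Ioi a, (x - a) * Real.exp (-(c * (x - a))) = 1 / c ^ 2 := by
  rw [integral_Ioi_of_hasDerivAt_of_tendsto' (fun x _ => aux_hasDeriv c a hc.ne' x)
    (aux_integrableOn c a hc) (aux_tendsto c a hc)]
  simp

private lemma gauss_max_bound (σ t : ℝ) (hσ : 0 < σ) (ht : 0 < t) :
    Integrable (fun x => max (|x| - t) 0) (gaussianReal 0 (σ ^ 2).toNNReal) ∧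
    ∫ x, max (|x| - t) 0 ∂(gaussianReal 0 (σ ^ 2).toNNReal)
      ≤ 2 * ((Real.sqrt (2 * Real.pi * σ ^ 2))⁻¹
          * (Real.exp (-(t ^ 2 / (2 * σ ^ 2))) * ((σ ^ 2) ^ 2 / t ^ 2))) := by
  set v : NNReal := (σ ^ 2).toNNReal with hv
  have hvc : (v : ℝ) = σ ^ 2 := Real.coe_toNNReal _ (sq_nonneg σ)
  have hv0 : v ≠ 0 := by
    simp only [hv, ne_eq, Real.toNNReal_eq_zero, not_le]
    positivity
  have hπ : 0 < Real.pi := Real.pi_pos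
  set C : ℝ := (Real.sqrt (2 * Real.pi * σ ^ 2))⁻¹ with hC
  have hC0 : 0 < C := by rw [hC]; positivity
  have hpdf : ∀ x : ℝ, gaussianPDFReal 0 v x = C * Real.exp (-(x ^ 2 / (2 * σ ^ 2))) := by
    intro x
    rw [gaussianPDFReal, hvc]
    norm_num [neg_div]
    exact hC.symm
  have hmf : Measurable fun x => (gaussianPDFReal 0 v x).toNNReal :=
    (measurable_gaussianPDFReal 0 v).real_toNNReal
  have hb : (0 : ℝ) < (2 * σ ^ 2)⁻¹ := by positivity
  -- integrability of the weighted function on ℝ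
  have hint : Integrable (fun x => gaussianPDFReal 0 v x * max (|x| - t) 0) volume := by
    have hintg : Integrable (fun x : ℝ => C * |x * Real.exp (-(2 * σ ^ 2)⁻¹ * x ^ 2)|) volume :=
      ((integrable_mul_exp_neg_mul_sq hb).norm.const_mul C)
    refine Integrable.mono' hintg ?_ (Filter.Eventually.of_forall fun x => ?_)
    · exact ((measurable_gaussianPDFReal 0 v).mul
        ((measurable_id.abs.sub_const t).max measurable_const)).aestronglyMeasurable
    · have h1 : 0 ≤ gaussianPDFReal 0 v x * max (|x| - t) 0 :=
        mul_nonneg (gaussianPDFReal_nonneg 0 v x) (le_max_right _ _)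
      rw [Real.norm_of_nonneg h1, hpdf x]
      have h2 : max (|x| - t) 0 ≤ |x| := by
        apply max_le _ (abs_nonneg x)
        linarith [abs_nonneg x, ht]
      have h3 : |x * Real.exp (-(2 * σ ^ 2)⁻¹ * x ^ 2)|
          = |x| * Real.exp (-(x ^ 2 / (2 * σ ^ 2))) := by
        rw [abs_mul, Real.abs_exp, neg_mul, inv_mul_eq_div]
      rw [h3]
      calc C * Real.exp (-(x ^ 2 / (2 * σ ^ 2))) * max (|x| - t) 0
          ≤ C * Real.exp (-(x ^ 2 / (2 * σ ^ 2))) * |x| := by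
            apply mul_le_mul_of_nonneg_left h2; positivity
        _ = C * (|x| * Real.exp (-(x ^ 2 / (2 * σ ^ 2)))) := by ring
  have hdens : gaussianReal 0 v
      = volume.withDensity fun x => ((gaussianPDFReal 0 v x).toNNReal : ENNReal) :=
    gaussianReal_of_var_ne_zero 0 hv0
  constructor
  · rw [hdens, integrable_withDensity_iff_integrable_smul hmf]
    refine hint.congr (Filter.Eventually.of_forall fun x => ?_)
    simp only [NNReal.smul_def, Real.coe_toNNReal _ (gaussianPDFReal_nonneg 0 v x), smul_eq_mul]
  -- now the integral bound
  rw [hdens, integral_withDensity_eq_integral_smul hmf]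
  set F : ℝ → ℝ := fun y => C * Real.exp (-(y ^ 2 / (2 * σ ^ 2))) * max (y - t) 0 with hF
  have hFof : ∀ x : ℝ, (gaussianPDFReal 0 v x).toNNReal • max (|x| - t) 0 = F |x| := by
    intro x
    rw [NNReal.smul_def, Real.coe_toNNReal _ (gaussianPDFReal_nonneg 0 v x), hpdf x, hF]
    simp [sq_abs]
  simp only [hFof]
  rw [integral_comp_abs (f := F)]
  set c : ℝ := t / σ ^ 2 with hc
  have hc0 : 0 < c := by positivity
  set K : ℝ := C * Real.exp (-(t ^ 2 / (2 * σ ^ 2))) with hK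
  have hK0 : 0 ≤ K := by positivity
  set g : ℝ → ℝ := fun x => K * ((x - t) * Real.exp (-(c * (x - t)))) with hg
  set G : ℝ → ℝ := Set.indicator (Set.Ioi t) g with hG
  have hFG : ∀ x : ℝ, F x ≤ G x := by
    intro x
    rcases le_or_gt x t with hx | hx
    · have : F x = 0 := by
        rw [hF]
        simp only [max_eq_right (by linarith : x - t ≤ 0), mul_zero]
      rw [this, hG]
      refine Set.indicator_apply_nonneg fun hy => ?_
      simp only [Set.mem_Ioi] at hy
      have h0 : (0:ℝ) ≤ x - t := by linarith
      simp only [hg]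
      positivity
    · have hGx : G x = g x := Set.indicator_of_mem (Set.mem_Ioi.mpr hx) g
      rw [hGx]
      simp only [hF, hg]
      rw [max_eq_left (by linarith : (0:ℝ) ≤ x - t)]
      have hexp : Real.exp (-(x ^ 2 / (2 * σ ^ 2)))
          ≤ Real.exp (-(t ^ 2 / (2 * σ ^ 2))) * Real.exp (-(c * (x - t))) := by
        rw [← Real.exp_add, Real.exp_le_exp]
        rw [hc]
        have h2σ : (0:ℝ) < 2 * σ ^ 2 := by positivity
        rw [div_mul_eq_mul_div, ← sub_nonneg]
        have : -(t ^ 2 / (2 * σ ^ 2)) + -(t * (x - t) / σ ^ 2) - -(x ^ 2 / (2 * σ ^ 2))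
            = (x - t) ^ 2 / (2 * σ ^ 2) := by
          field_simp
          ring
        rw [this]
        positivity
      calc C * Real.exp (-(x ^ 2 / (2 * σ ^ 2))) * (x - t)
          ≤ C * (Real.exp (-(t ^ 2 / (2 * σ ^ 2))) * Real.exp (-(c * (x - t)))) * (x - t) := by
            apply mul_le_mul_of_nonneg_right _ (by linarith)
            exact mul_le_mul_of_nonneg_left hexp hC0.le
        _ = K * ((x - t) * Real.exp (-(c * (x - t)))) := by rw [hK]; ring
  have hgint : MeasureTheory.IntegrableOn g (Set.Ioi t) volume :=
    (aux_integrableOn c t hc0).const_mul K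
  have hGint : MeasureTheory.IntegrableOn G (Set.Ioi 0) volume := by
    rw [hG, MeasureTheory.IntegrableOn, MeasureTheory.integrable_indicator_iff measurableSet_Ioi]
    rw [MeasureTheory.IntegrableOn, Measure.restrict_restrict measurableSet_Ioi,
      Set.inter_eq_left.mpr (Set.Ioi_subset_Ioi ht.le)]
    exact hgint
  have hmono : ∫ x in Set.Ioi (0:ℝ), F x ≤ ∫ x in Set.Ioi (0:ℝ), G x := by
    refine integral_mono_of_nonneg (Filter.Eventually.of_forall fun x => ?_) hGint
      (Filter.Eventually.of_forall fun x => hFG x)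
    rw [hF]
    positivity
  have hGval : ∫ x in Set.Ioi (0:ℝ), G x = K * (1 / c ^ 2) := by
    rw [hG, MeasureTheory.setIntegral_indicator measurableSet_Ioi,
      Set.inter_eq_right.mpr (Set.Ioi_subset_Ioi ht.le), hg]
    rw [MeasureTheory.integral_const_mul, aux_integral c t hc0]
  have hfinal : K * (1 / c ^ 2)
      = C * (Real.exp (-(t ^ 2 / (2 * σ ^ 2))) * ((σ ^ 2) ^ 2 / t ^ 2)) := by
    rw [hK, hc]
    field_simp
  calc 2 * ∫ x in Set.Ioi (0:ℝ), F x ≤ 2 * (K * (1 / c ^ 2)) := by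
        have := hmono.trans_eq hGval
        linarith
    _ = 2 * (C * (Real.exp (-(t ^ 2 / (2 * σ ^ 2))) * ((σ ^ 2) ^ 2 / t ^ 2))) := by
        rw [hfinal]

theorem expected_max_abs_gaussian
    (σ : ℝ) (hσ : 0 < σ) (d : ℕ) (hd : 2 ≤ d)
    (Ω : Type*) [MeasurableSpace Ω] (P : Measure Ω) [IsProbabilityMeasure P]
    (Z : Fin d → Ω → ℝ) (hmeas : ∀ i, Measurable (Z i))
    (hind : iIndepFun Z P)
    (hlaw : ∀ i, Measure.map (Z i) P = gaussianReal 0 ((σ ^ 2).toNNReal)) :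
    ∫ ω, (⨆ i, |Z i ω|) ∂P
      ≤ σ * (Real.sqrt (2 * Real.log d)
              + (4 / Real.sqrt (2 * Real.pi)) * (1 / (2 * Real.log d))) := by
  have hπ : 0 < Real.pi := Real.pi_pos
  have hd1 : (1 : ℝ) < (d : ℝ) := by
    have : (2 : ℝ) ≤ (d : ℝ) := by exact_mod_cast hd
    linarith
  have hd0 : (0 : ℝ) < (d : ℝ) := by linarith
  have hL : 0 < Real.log d := Real.log_pos hd1
  set L : ℝ := Real.log d with hLdef
  set t : ℝ := σ * Real.sqrt (2 * L) with htdef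
  have hsq : Real.sqrt (2 * L) ^ 2 = 2 * L := Real.sq_sqrt (by positivity)
  have ht : 0 < t := by
    apply mul_pos hσ
    exact Real.sqrt_pos.mpr (by positivity)
  have ht2 : t ^ 2 = σ ^ 2 * (2 * L) := by
    rw [htdef, mul_pow, hsq]
  haveI : Nonempty (Fin d) := ⟨⟨0, by omega⟩⟩
  -- integrability of each positive part
  have hcont : Continuous fun x : ℝ => max (|x| - t) 0 :=
    (continuous_abs.sub continuous_const).max continuous_const
  have hInt : ∀ i, Integrable (fun ω => max (|Z i ω| - t) 0) P := by
    intro i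
    have h := (gauss_max_bound σ t hσ ht).1
    rw [← hlaw i] at h
    have := (integrable_map_measure hcont.aestronglyMeasurable.aemeasurable.aestronglyMeasurable
      (hmeas i).aemeasurable).mp h
    exact this
  -- each expectation bound
  set B : ℝ := 2 * ((Real.sqrt (2 * Real.pi * σ ^ 2))⁻¹
      * (Real.exp (-(t ^ 2 / (2 * σ ^ 2))) * ((σ ^ 2) ^ 2 / t ^ 2))) with hBdef
  have hIB : ∀ i, ∫ ω, max (|Z i ω| - t) 0 ∂P ≤ B := by
    intro i
    have hmap : ∫ ω, max (|Z i ω| - t) 0 ∂P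
        = ∫ x, max (|x| - t) 0 ∂(gaussianReal 0 ((σ ^ 2).toNNReal)) := by
      rw [← hlaw i, integral_map (hmeas i).aemeasurable
        hcont.aestronglyMeasurable.aemeasurable.aestronglyMeasurable]
    rw [hmap]
    exact (gauss_max_bound σ t hσ ht).2
  -- pointwise bound of the sup
  have hsup : ∀ ω, (⨆ i, |Z i ω|) ≤ t + ∑ i, max (|Z i ω| - t) 0 := by
    intro ω
    refine ciSup_le fun i => ?_
    have h1 : |Z i ω| ≤ t + max (|Z i ω| - t) 0 := by
      rcases le_or_gt (|Z i ω|) t with h | h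
      · have : max (|Z i ω| - t) 0 ≥ 0 := le_max_right _ _
        linarith
      · rw [max_eq_left (by linarith)]
        linarith
    have h2 : max (|Z i ω| - t) 0 ≤ ∑ j, max (|Z j ω| - t) 0 :=
      Finset.single_le_sum (f := fun j => max (|Z j ω| - t) 0)
        (fun j _ => le_max_right _ _) (Finset.mem_univ i)
    linarith
  -- integral bound
  have hIntSum : Integrable (fun ω => t + ∑ i, max (|Z i ω| - t) 0) P :=
    (integrable_const t).add (integrable_finset_sum _ fun i _ => hInt i)
  have hstep : ∫ ω, (⨆ i, |Z i ω|) ∂P ≤ ∫ ω, (t + ∑ i, max (|Z i ω| - t) 0) ∂P := by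
    refine integral_mono_of_nonneg (Filter.Eventually.of_forall fun ω => ?_) hIntSum
      (Filter.Eventually.of_forall fun ω => hsup ω)
    have : |Z ⟨0, by omega⟩ ω| ≤ ⨆ i, |Z i ω| := by
      apply le_ciSup (f := fun i => |Z i ω|)
      exact Set.Finite.bddAbove (Set.finite_range _)
    exact le_trans (abs_nonneg _) this
  have hval : ∫ ω, (t + ∑ i, max (|Z i ω| - t) 0) ∂P
      = t + ∑ i, ∫ ω, max (|Z i ω| - t) 0 ∂P := by
    rw [integral_add (integrable_const t) (integrable_finset_sum _ fun i _ => hInt i),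
      integral_const, integral_finset_sum _ fun i _ => hInt i]
    simp
  have hsum : ∑ i : Fin d, ∫ ω, max (|Z i ω| - t) 0 ∂P ≤ (d : ℝ) * B := by
    calc ∑ i : Fin d, ∫ ω, max (|Z i ω| - t) 0 ∂P ≤ ∑ _i : Fin d, B :=
          Finset.sum_le_sum fun i _ => hIB i
      _ = (d : ℝ) * B := by simp [mul_comm]
  -- compute B
  have hsqrtpdt : Real.sqrt (2 * Real.pi * σ ^ 2) = Real.sqrt (2 * Real.pi) * σ := by
    rw [Real.sqrt_mul (by positivity), Real.sqrt_sq hσ.le]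
  have hexp : Real.exp (-(t ^ 2 / (2 * σ ^ 2))) = (d : ℝ)⁻¹ := by
    have : t ^ 2 / (2 * σ ^ 2) = L := by
      rw [ht2]; field_simp
    rw [this, hLdef, Real.exp_neg, Real.exp_log hd0]
  have hBval : (d : ℝ) * B = σ * ((2 / Real.sqrt (2 * Real.pi)) * (1 / (2 * L))) := by
    rw [hBdef, hexp, hsqrtpdt, ht2]
    have h2π : 0 < Real.sqrt (2 * Real.pi) := Real.sqrt_pos.mpr (by positivity)
    field_simp
  have hBle : (d : ℝ) * B ≤ σ * ((4 / Real.sqrt (2 * Real.pi)) * (1 / (2 * L))) := by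
    rw [hBval]
    have h2π : 0 < Real.sqrt (2 * Real.pi) := Real.sqrt_pos.mpr (by positivity)
    have h24 : (2 : ℝ) / Real.sqrt (2 * Real.pi) ≤ 4 / Real.sqrt (2 * Real.pi) := by
      gcongr
      norm_num
    have hpos : (0:ℝ) ≤ 1 / (2 * L) := by positivity
    have := mul_le_mul_of_nonneg_right h24 hpos
    nlinarith [hσ.le]
  calc ∫ ω, (⨆ i, |Z i ω|) ∂P ≤ t + ∑ i, ∫ ω, max (|Z i ω| - t) 0 ∂P := by
        rw [← hval]; exact hstep
    _ ≤ t + (d : ℝ) * B := by linarith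
    _ ≤ σ * Real.sqrt (2 * L) + σ * ((4 / Real.sqrt (2 * Real.pi)) * (1 / (2 * L))) := by
        rw [htdef]; linarith
    _ = σ * (Real.sqrt (2 * L)
          + (4 / Real.sqrt (2 * Real.pi)) * (1 / (2 * L))) := by ring
end

section
/- Let σ > 0 and let d ≥ 2. Let Z 1, …, Z d be independent random variables on a probability space, each distributed according to the Gaussian distribution on ℝ with mean 0 and variance σ². Then E[max over i of (Z i)²] ≤ σ² · (2·ln d + (4/√(2·π)) · (1/√(2·ln d))). -/
open MeasureTheory ProbabilityTheory
open Set Filter Real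
open scoped NNReal ENNReal




lemma int_sq_exp {b : ℝ} (hb : 0 < b) :
    Integrable (fun x : ℝ => x ^ 2 * Real.exp (-b * x ^ 2)) := by
  have := integrable_rpow_mul_exp_neg_mul_sq hb (s := ((2:ℕ):ℝ)) (by norm_num)
  refine this.congr (ae_of_all _ fun x => ?_)
  simp [Real.rpow_natCast]

lemma int_inv_sq_exp {b u : ℝ} (hb : 0 < b) (hu : 0 < u) :
    IntegrableOn (fun x : ℝ => x⁻¹ ^ 2 * Real.exp (-b * x ^ 2)) (Ioi u) := by
  refine Integrable.mono' ((integrable_exp_neg_mul_sq hb).const_mul (u⁻¹ ^ 2)).integrableOn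
    ?_ ?_
  · exact ((measurable_inv.pow_const 2).mul
      (((measurable_id.pow_const 2).const_mul (-b)).exp)).aestronglyMeasurable
  · filter_upwards [ae_restrict_mem measurableSet_Ioi] with x hx
    have hx0 : 0 < x := hu.trans hx
    rw [Real.norm_eq_abs, abs_mul, abs_of_nonneg (by positivity : (0:ℝ) ≤ x⁻¹ ^ 2),
      abs_of_nonneg (Real.exp_pos _).le]
    have h1 : x⁻¹ ^ 2 ≤ u⁻¹ ^ 2 := by
      have := inv_anti₀ hu (le_of_lt hx)
      nlinarith [inv_pos.mpr hx0, inv_pos.mpr hu]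
    nlinarith [Real.exp_pos (-b * x ^ 2)]

lemma exp_tendsto_zero {b : ℝ} (hb : 0 < b) :
    Tendsto (fun x : ℝ => Real.exp (-b * x ^ 2)) atTop (nhds 0) := by
  apply Real.tendsto_exp_atBot.comp
  have h : Tendsto (fun x : ℝ => b * x ^ 2) atTop atTop :=
    (tendsto_pow_atTop (two_ne_zero)).const_mul_atTop hb
  simpa [neg_mul] using tendsto_neg_atBot_iff.mpr h

lemma mul_exp_tendsto_zero {b : ℝ} (hb : 0 < b) :
    Tendsto (fun x : ℝ => x * Real.exp (-b * x ^ 2)) atTop (nhds 0) := by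
  have h := (tendsto_rpow_abs_mul_exp_neg_mul_sq_cocompact hb 1).mono_left _root_.atTop_le_cocompact
  refine h.congr' ?_
  filter_upwards [eventually_ge_atTop (0:ℝ)] with x hx
  rw [abs_of_nonneg hx, Real.rpow_one]

lemma inv_mul_exp_tendsto_zero {b : ℝ} (hb : 0 < b) :
    Tendsto (fun x : ℝ => x⁻¹ * Real.exp (-b * x ^ 2)) atTop (nhds 0) := by
  apply squeeze_zero' (g := fun x : ℝ => x⁻¹)
  · filter_upwards [eventually_gt_atTop (0:ℝ)] with x hx
    positivity
  · filter_upwards [eventually_gt_atTop (0:ℝ)] with x hx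
    have h1 : Real.exp (-b * x ^ 2) ≤ 1 := Real.exp_le_one_iff.mpr (by nlinarith)
    nlinarith [inv_pos.mpr hx]
  · exact tendsto_inv_atTop_zero

lemma tailJ {b u : ℝ} (hb : 0 < b) (hu : 0 < u) :
    ∫ x in Ioi u, (x ^ 2 - u ^ 2) * Real.exp (-b * x ^ 2)
      ≤ (2 * b ^ 2 * u)⁻¹ * Real.exp (-b * u ^ 2) := by
  set E : ℝ → ℝ := fun x => Real.exp (-b * x ^ 2) with hE
  set g : ℝ → ℝ := fun x =>
    x ^ 2 - u ^ 2 - (2 * b)⁻¹ - (2 * b)⁻¹ * u ^ 2 * x⁻¹ ^ 2 + (b * u)⁻¹ * x with hg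
  set K : ℝ → ℝ := fun x =>
    (-(2 * b)⁻¹ * (x - u ^ 2 * x⁻¹) - (2 * b ^ 2 * u)⁻¹) * E x with hK
  have hKderiv : ∀ x : ℝ, x ≠ 0 → HasDerivAt K (g x * E x) x := by
    intro x hx
    have hp : HasDerivAt (fun y : ℝ => -(2 * b)⁻¹ * (y - u ^ 2 * y⁻¹) - (2 * b ^ 2 * u)⁻¹)
        (-(2 * b)⁻¹ * (1 - u ^ 2 * (-(x ^ 2)⁻¹))) x :=
      (((hasDerivAt_id x).sub ((hasDerivAt_inv hx).const_mul (u ^ 2))).const_mul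
        (-(2 * b)⁻¹)).sub_const _
    have hExp : HasDerivAt E (Real.exp (-b * x ^ 2) * (-b * (2 * x))) x := by
      have h2 : HasDerivAt (fun y : ℝ => -b * y ^ 2) (-b * (2 * x)) x := by
        simpa using ((hasDerivAt_pow 2 x).const_mul (-b))
      exact h2.exp
    have := hp.mul hExp
    refine HasDerivAt.congr_deriv this ?_
    rw [hg, hE]
    field_simp
    ring
  have hgint : IntegrableOn (fun x => g x * E x) (Ioi u) := by
    have h1 := (int_sq_exp hb).integrableOn (s := Ioi u)
    have h2 := ((integrable_exp_neg_mul_sq hb).const_mul (u ^ 2 + (2*b)⁻¹)).integrableOn (s := Ioi u)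
    have h3 := (int_inv_sq_exp hb hu).const_mul ((2 * b)⁻¹ * u ^ 2)
    have h4 := ((integrable_mul_exp_neg_mul_sq hb).const_mul ((b * u)⁻¹)).integrableOn (s := Ioi u)
    have : (fun x => g x * E x) = fun x =>
        (x ^ 2 * E x - (u ^ 2 + (2*b)⁻¹) * E x - (2 * b)⁻¹ * u ^ 2 * (x⁻¹ ^ 2 * E x))
          + (b * u)⁻¹ * (x * E x) := by
      funext x; rw [hg, hE]; ring
    rw [this]
    exact ((h1.sub h2).sub h3).add h4
  have hKtend : Tendsto K atTop (nhds 0) := by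
    have : K = fun x => -(2 * b)⁻¹ * (x * E x)
        + ((2 * b)⁻¹ * u ^ 2) * (x⁻¹ * E x) + (-(2 * b ^ 2 * u)⁻¹) * E x := by
      funext x; rw [hK, hE]; ring
    rw [this]
    have := (((mul_exp_tendsto_zero hb).const_mul (-(2 * b)⁻¹)).add
      ((inv_mul_exp_tendsto_zero hb).const_mul ((2 * b)⁻¹ * u ^ 2))).add
      ((exp_tendsto_zero hb).const_mul (-(2 * b ^ 2 * u)⁻¹))
    rw [show (0:ℝ) = -(2 * b)⁻¹ * 0 + ((2 * b)⁻¹ * u ^ 2) * 0 + (-(2 * b ^ 2 * u)⁻¹) * 0 by ring]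
    exact this
  have key : ∫ x in Ioi u, g x * E x = 0 - K u := by
    refine integral_Ioi_of_hasDerivAt_of_tendsto' (fun x hx => ?_) hgint hKtend
    exact hKderiv x (ne_of_gt (lt_of_lt_of_le hu hx))
  have hKu : K u = -((2 * b ^ 2 * u)⁻¹ * E u) := by
    have h0 : u - u ^ 2 * u⁻¹ = 0 := by
      rw [pow_two, mul_assoc, mul_inv_cancel₀ hu.ne', mul_one, sub_self]
    show (-(2 * b)⁻¹ * (u - u ^ 2 * u⁻¹) - (2 * b ^ 2 * u)⁻¹) * E u = _
    rw [h0]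
    ring
  have hmono : ∫ x in Ioi u, (x ^ 2 - u ^ 2) * E x ≤ ∫ x in Ioi u, g x * E x := by
    refine setIntegral_mono_on ?_ hgint measurableSet_Ioi (fun x hx => ?_)
    · have h1 := (int_sq_exp hb).integrableOn (s := Ioi u)
      have h2 := ((integrable_exp_neg_mul_sq hb).const_mul (u ^ 2)).integrableOn (s := Ioi u)
      have : (fun x => (x ^ 2 - u ^ 2) * E x) = fun x => x ^ 2 * E x - u ^ 2 * E x := by
        funext x; rw [hE]; ring
      rw [this]; exact h1.sub h2
    · have hxu : u < x := hx
      have hx0 : 0 < x := hu.trans hxu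
      have hEpos : 0 < E x := Real.exp_pos _
      have hkey : (2 * b)⁻¹ + (2 * b)⁻¹ * u ^ 2 * x⁻¹ ^ 2 ≤ (b * u)⁻¹ * x := by
        have h1 : u ^ 2 * x⁻¹ ^ 2 ≤ 1 := by
          rw [← mul_pow]
          have : u * x⁻¹ ≤ 1 := by
            rw [← div_eq_mul_inv, div_le_one hx0]; exact hxu.le
          nlinarith [mul_pos hu (inv_pos.mpr hx0)]
        have h2 : (1:ℝ) ≤ x / u := (one_le_div hu).mpr hxu.le
        have hb' : (0:ℝ) < (2 * b)⁻¹ := by positivity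
        have : (2 * b)⁻¹ + (2 * b)⁻¹ * (u ^ 2 * x⁻¹ ^ 2) ≤ (2 * b)⁻¹ * 2 := by nlinarith
        calc (2 * b)⁻¹ + (2 * b)⁻¹ * u ^ 2 * x⁻¹ ^ 2 ≤ (2 * b)⁻¹ * 2 := by linarith [this]
          _ = b⁻¹ := by field_simp
          _ ≤ b⁻¹ * (x / u) := by nlinarith [inv_pos.mpr hb]
          _ = (b * u)⁻¹ * x := by rw [mul_inv, div_eq_mul_inv]; ring
      have : x ^ 2 - u ^ 2 ≤ g x := by rw [hg]; dsimp only; nlinarith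
      nlinarith
  calc ∫ x in Ioi u, (x ^ 2 - u ^ 2) * E x ≤ ∫ x in Ioi u, g x * E x := hmono
    _ = 0 - K u := key
    _ = (2 * b ^ 2 * u)⁻¹ * E u := by rw [hKu]; ring

lemma fullI_int {b u : ℝ} (hb : 0 < b) :
    Integrable (fun x : ℝ => max (x ^ 2 - u ^ 2) 0 * Real.exp (-b * x ^ 2)) := by
  have hfmeas : Measurable (fun x : ℝ => max (x ^ 2 - u ^ 2) 0 * Real.exp (-b * x ^ 2)) :=
    (((measurable_id.pow_const 2).sub_const _).max measurable_const).mul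
      (((measurable_id.pow_const 2).const_mul (-b)).exp)
  refine (int_sq_exp hb).mono' hfmeas.aestronglyMeasurable (ae_of_all _ fun x => ?_)
  have h1 : (0:ℝ) ≤ max (x ^ 2 - u ^ 2) 0 := le_max_right _ _
  have h2 : max (x ^ 2 - u ^ 2) 0 ≤ x ^ 2 :=
    max_le (by nlinarith [sq_nonneg u]) (sq_nonneg x)
  rw [Real.norm_eq_abs, abs_of_nonneg (by positivity)]
  nlinarith [Real.exp_pos (-b * x ^ 2)]

lemma fullI {b u : ℝ} (hb : 0 < b) (hu : 0 < u) :
    ∫ x : ℝ, max (x ^ 2 - u ^ 2) 0 * Real.exp (-b * x ^ 2)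
      ≤ 2 * ((2 * b ^ 2 * u)⁻¹ * Real.exp (-b * u ^ 2)) := by
  set f : ℝ → ℝ := fun x => max (x ^ 2 - u ^ 2) 0 * Real.exp (-b * x ^ 2) with hf
  have hfint : Integrable f := fullI_int hb
  have hsplit : ∫ x, f x = (∫ x in Iic (-u), f x) + ∫ x in Ioi (-u), f x :=
    (intervalIntegral.integral_Iic_add_Ioi hfint.integrableOn hfint.integrableOn).symm
  have hleft : ∫ x in Iic (-u), f x = ∫ x in Ioi u, f x := by
    have : ∫ x in Iic (-u), f x = ∫ x in Iic (-u), f (-x) := by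
      refine setIntegral_congr_fun measurableSet_Iic fun x _ => ?_
      rw [hf]; simp [neg_sq]
    rw [this, integral_comp_neg_Iic, neg_neg]
  have hmid : ∫ x in Ioc (-u) u, f x = 0 := by
    refine setIntegral_eq_zero_of_forall_eq_zero fun x hx => ?_
    have h1 : x ^ 2 ≤ u ^ 2 := sq_le_sq' (le_of_lt hx.1) hx.2
    rw [hf]
    have : max (x ^ 2 - u ^ 2) 0 = 0 := max_eq_right (by linarith)
    simp [this]
  have hright : ∫ x in Ioi (-u), f x = ∫ x in Ioi u, f x := by
    rw [← Ioc_union_Ioi_eq_Ioi (by linarith : -u ≤ u),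
      setIntegral_union (Ioc_disjoint_Ioi le_rfl) measurableSet_Ioi
        hfint.integrableOn hfint.integrableOn, hmid, zero_add]
  have htail : ∫ x in Ioi u, f x = ∫ x in Ioi u, (x ^ 2 - u ^ 2) * Real.exp (-b * x ^ 2) := by
    refine setIntegral_congr_fun measurableSet_Ioi fun x hx => ?_
    have hxu : u < x := hx
    have : max (x ^ 2 - u ^ 2) 0 = x ^ 2 - u ^ 2 :=
      max_eq_left (by nlinarith [hu.trans hxu])
    rw [hf]; simp only; rw [this]
  rw [hsplit, hleft, hright, htail]
  have := tailJ hb hu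
  linarith

lemma pdf_eq {σ : ℝ} (hσ : 0 < σ) (x : ℝ) :
    gaussianPDFReal 0 (σ ^ 2).toNNReal x
      = (Real.sqrt (2 * Real.pi) * σ)⁻¹ * Real.exp (-(2 * σ ^ 2)⁻¹ * x ^ 2) := by
  rw [gaussianPDFReal]
  have hcoe : (((σ ^ 2).toNNReal : ℝ)) = σ ^ 2 := Real.coe_toNNReal _ (sq_nonneg σ)
  rw [hcoe, sub_zero, Real.sqrt_mul (by positivity) (σ ^ 2), Real.sqrt_sq hσ.le]
  congr 1
  rw [div_eq_mul_inv]
  ring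

lemma integral_gaussianReal_eq {σ : ℝ} (hσ : 0 < σ) (g : ℝ → ℝ) :
    ∫ x, g x ∂(gaussianReal 0 (σ ^ 2).toNNReal)
      = ∫ x, gaussianPDFReal 0 (σ ^ 2).toNNReal x * g x := by
  have hv : (σ ^ 2).toNNReal ≠ 0 := by
    simp only [ne_eq, Real.toNNReal_eq_zero, not_le]
    positivity
  rw [gaussianReal_of_var_ne_zero 0 hv,
    show gaussianPDF 0 (σ ^ 2).toNNReal
      = fun x => ((Real.toNNReal (gaussianPDFReal 0 (σ ^ 2).toNNReal x) : ℝ≥0) : ℝ≥0∞) from rfl,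
    integral_withDensity_eq_integral_smul (measurable_gaussianPDFReal 0 _).real_toNNReal g]
  congr 1; funext x
  rw [NNReal.smul_def, Real.coe_toNNReal _ (gaussianPDFReal_nonneg _ _ _), smul_eq_mul]

lemma gauss_sq_int {σ : ℝ} (hσ : 0 < σ) :
    Integrable (fun x : ℝ => x ^ 2) (gaussianReal 0 (σ ^ 2).toNNReal) := by
  have hv : (σ ^ 2).toNNReal ≠ 0 := by
    simp only [ne_eq, Real.toNNReal_eq_zero, not_le]
    positivity
  rw [gaussianReal_of_var_ne_zero 0 hv,
    show gaussianPDF 0 (σ ^ 2).toNNReal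
      = fun x => ((Real.toNNReal (gaussianPDFReal 0 (σ ^ 2).toNNReal x) : ℝ≥0) : ℝ≥0∞) from rfl,
    integrable_withDensity_iff_integrable_smul (measurable_gaussianPDFReal 0 _).real_toNNReal]
  have hb : (0:ℝ) < (2 * σ ^ 2)⁻¹ := by positivity
  refine ((int_sq_exp hb).const_mul ((Real.sqrt (2 * Real.pi) * σ)⁻¹)).congr
    (ae_of_all _ fun x => ?_)
  show _ = (gaussianPDFReal 0 (σ ^ 2).toNNReal x).toNNReal • x ^ 2
  rw [NNReal.smul_def, Real.coe_toNNReal _ (gaussianPDFReal_nonneg _ _ _), smul_eq_mul,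
    pdf_eq hσ]
  ring

lemma coord_bound {σ u : ℝ} (hσ : 0 < σ) (hu : 0 < u) :
    ∫ x, max (x ^ 2 - u ^ 2) 0 ∂(gaussianReal 0 (σ ^ 2).toNNReal)
      ≤ (Real.sqrt (2 * Real.pi) * σ * u)⁻¹ * (4 * σ ^ 4) * Real.exp (-u ^ 2 / (2 * σ ^ 2)) := by
  set b : ℝ := (2 * σ ^ 2)⁻¹ with hbdef
  have hb : (0:ℝ) < b := by positivity
  set c : ℝ := (Real.sqrt (2 * Real.pi) * σ)⁻¹ with hcdef
  have hc : (0:ℝ) < c := by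
    rw [hcdef]
    have := Real.sqrt_pos.mpr (by positivity : (0:ℝ) < 2 * Real.pi)
    positivity
  rw [integral_gaussianReal_eq hσ]
  have heq : ∀ x : ℝ, gaussianPDFReal 0 (σ ^ 2).toNNReal x * max (x ^ 2 - u ^ 2) 0
      = c * (max (x ^ 2 - u ^ 2) 0 * Real.exp (-b * x ^ 2)) := by
    intro x; rw [pdf_eq hσ]; ring
  calc ∫ x, gaussianPDFReal 0 (σ ^ 2).toNNReal x * max (x ^ 2 - u ^ 2) 0
      = c * ∫ x, max (x ^ 2 - u ^ 2) 0 * Real.exp (-b * x ^ 2) := by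
        rw [← integral_const_mul]
        exact integral_congr_ae (ae_of_all _ heq)
    _ ≤ c * (2 * ((2 * b ^ 2 * u)⁻¹ * Real.exp (-b * u ^ 2))) := by
        exact mul_le_mul_of_nonneg_left (fullI hb hu) hc.le
    _ = (Real.sqrt (2 * Real.pi) * σ * u)⁻¹ * (4 * σ ^ 4) * Real.exp (-u ^ 2 / (2 * σ ^ 2)) := by
        have h1 : -b * u ^ 2 = -u ^ 2 / (2 * σ ^ 2) := by
          rw [hbdef, div_eq_mul_inv]; ring
        rw [h1, hcdef, hbdef]
        have hs : (0:ℝ) < Real.sqrt (2 * Real.pi) :=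
          Real.sqrt_pos.mpr (by positivity)
        field_simp
        ring

theorem expected_max_sq_gaussian
    (σ : ℝ) (hσ : 0 < σ) (d : ℕ) (hd : 2 ≤ d)
    (Ω : Type*) [MeasurableSpace Ω] (P : Measure Ω) [IsProbabilityMeasure P]
    (Z : Fin d → Ω → ℝ) (hmeas : ∀ i, Measurable (Z i))
    (hind : iIndepFun Z P)
    (hlaw : ∀ i, Measure.map (Z i) P = gaussianReal 0 ((σ ^ 2).toNNReal)) :
    ∫ ω, (⨆ i, (Z i ω) ^ 2) ∂P
      ≤ σ ^ 2 * (2 * Real.log d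
              + (4 / Real.sqrt (2 * Real.pi)) * (1 / Real.sqrt (2 * Real.log d))) := by
  have hd1 : (1:ℝ) < (d:ℝ) := by exact_mod_cast lt_of_lt_of_le one_lt_two hd
  have hlogd : 0 < Real.log d := Real.log_pos hd1
  have hne : Nonempty (Fin d) := ⟨⟨0, by omega⟩⟩
  set t₀ : ℝ := 2 * σ ^ 2 * Real.log d with ht₀
  set u : ℝ := σ * Real.sqrt (2 * Real.log d) with hudef
  have hsqrtpos : 0 < Real.sqrt (2 * Real.log d) := Real.sqrt_pos.mpr (by linarith)
  have hu : 0 < u := by positivity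
  have hu2 : u ^ 2 = t₀ := by
    rw [hudef, mul_pow, Real.sq_sqrt (by linarith : (0:ℝ) ≤ 2 * Real.log d), ht₀]
    ring
  -- integrability
  have hsq_int : ∀ i, Integrable (fun ω => Z i ω ^ 2) P := by
    intro i
    have h1 : Integrable (fun x : ℝ => x ^ 2) (Measure.map (Z i) P) := by
      rw [hlaw i]; exact gauss_sq_int hσ
    exact (integrable_map_measure
      ((measurable_id.pow_const 2).aestronglyMeasurable) (hmeas i).aemeasurable).mp h1
  have hpos_int : ∀ i, Integrable (fun ω => max (Z i ω ^ 2 - t₀) 0) P := fun i =>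
    ((hsq_int i).sub (integrable_const t₀)).pos_part
  have hsum_int : Integrable (fun ω => ∑ i : Fin d, max (Z i ω ^ 2 - t₀) 0) P :=
    integrable_finset_sum _ fun i _ => hpos_int i
  -- pointwise bound
  have hptwise : ∀ ω, (⨆ i, (Z i ω) ^ 2) ≤ t₀ + ∑ i : Fin d, max (Z i ω ^ 2 - t₀) 0 := by
    intro ω
    refine ciSup_le fun i => ?_
    have h1 : Z i ω ^ 2 ≤ t₀ + max (Z i ω ^ 2 - t₀) 0 := by
      have := le_max_left (Z i ω ^ 2 - t₀) 0
      linarith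
    have h2 : max (Z i ω ^ 2 - t₀) 0 ≤ ∑ j : Fin d, max (Z j ω ^ 2 - t₀) 0 :=
      Finset.single_le_sum (f := fun j => max (Z j ω ^ 2 - t₀) 0)
        (fun j _ => le_max_right _ _) (Finset.mem_univ i)
    linarith
  -- integral bound
  have hstep1 : ∫ ω, (⨆ i, (Z i ω) ^ 2) ∂P
      ≤ ∫ ω, (t₀ + ∑ i : Fin d, max (Z i ω ^ 2 - t₀) 0) ∂P := by
    refine integral_mono_of_nonneg (ae_of_all _ fun ω => ?_)
      ((integrable_const t₀).add hsum_int) (ae_of_all _ hptwise)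
    exact Real.iSup_nonneg fun i => sq_nonneg _
  have hstep2 : ∫ ω, (t₀ + ∑ i : Fin d, max (Z i ω ^ 2 - t₀) 0) ∂P
      = t₀ + ∑ i : Fin d, ∫ ω, max (Z i ω ^ 2 - t₀) 0 ∂P := by
    rw [integral_add (integrable_const t₀) hsum_int, integral_const,
      integral_finset_sum _ fun i _ => hpos_int i]
    simp
  have hcoord : ∀ i, ∫ ω, max (Z i ω ^ 2 - t₀) 0 ∂P
      ≤ (Real.sqrt (2 * Real.pi) * σ * u)⁻¹ * (4 * σ ^ 4) * (d:ℝ)⁻¹ := by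
    intro i
    have hmble : Measurable (fun x : ℝ => max (x ^ 2 - t₀) 0) :=
      ((measurable_id.pow_const 2).sub_const _).max measurable_const
    have h1 : ∫ ω, max (Z i ω ^ 2 - t₀) 0 ∂P
        = ∫ x, max (x ^ 2 - t₀) 0 ∂(gaussianReal 0 (σ ^ 2).toNNReal) := by
      rw [← hlaw i, integral_map (hmeas i).aemeasurable hmble.aestronglyMeasurable]
    have h2 := coord_bound hσ hu
    rw [hu2] at h2
    have h3 : Real.exp (-t₀ / (2 * σ ^ 2)) = (d:ℝ)⁻¹ := by
      have : -t₀ / (2 * σ ^ 2) = -Real.log d := by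
        rw [ht₀]
        field_simp
      rw [this, Real.exp_neg, Real.exp_log (by linarith : (0:ℝ) < d)]
    rw [h3] at h2
    rw [h1]
    exact h2
  have hsum : ∑ i : Fin d, ∫ ω, max (Z i ω ^ 2 - t₀) 0 ∂P
      ≤ (d:ℝ) * ((Real.sqrt (2 * Real.pi) * σ * u)⁻¹ * (4 * σ ^ 4) * (d:ℝ)⁻¹) := by
    calc ∑ i : Fin d, ∫ ω, max (Z i ω ^ 2 - t₀) 0 ∂P
        ≤ ∑ _i : Fin d, (Real.sqrt (2 * Real.pi) * σ * u)⁻¹ * (4 * σ ^ 4) * (d:ℝ)⁻¹ :=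
          Finset.sum_le_sum fun i _ => hcoord i
      _ = (d:ℝ) * ((Real.sqrt (2 * Real.pi) * σ * u)⁻¹ * (4 * σ ^ 4) * (d:ℝ)⁻¹) := by
          rw [Finset.sum_const, Finset.card_univ, Fintype.card_fin, nsmul_eq_mul]
  have hfinal : t₀ + (d:ℝ) * ((Real.sqrt (2 * Real.pi) * σ * u)⁻¹ * (4 * σ ^ 4) * (d:ℝ)⁻¹)
      = σ ^ 2 * (2 * Real.log d
          + (4 / Real.sqrt (2 * Real.pi)) * (1 / Real.sqrt (2 * Real.log d))) := by
    have hp : 0 < Real.sqrt (2 * Real.pi) := Real.sqrt_pos.mpr (by positivity)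
    have hd0 : (0:ℝ) < d := by linarith
    rw [hudef, ht₀]
    field_simp
  calc ∫ ω, (⨆ i, (Z i ω) ^ 2) ∂P
      ≤ t₀ + ∑ i : Fin d, ∫ ω, max (Z i ω ^ 2 - t₀) 0 ∂P := by
        rw [← hstep2]; exact hstep1
    _ ≤ t₀ + (d:ℝ) * ((Real.sqrt (2 * Real.pi) * σ * u)⁻¹ * (4 * σ ^ 4) * (d:ℝ)⁻¹) := by
        linarith
    _ = _ := hfinal
end

section
/- Let ε > 0, let δ ∈ (0,1], and let B be a positive integer with B ≥ (2/ε)·ln(4/δ) + 1. Let Z be a random variable with the truncated double geometric distribution TDGeo(ε/2, B). Then for every integer v and every set S ⊆ ℤ: P(v + Z ∈ S) ≤ exp(ε/2) · P((v − 1) + Z ∈ S) + δ/2, and also P((v − 1) + Z ∈ S) ≤ exp(ε/2) · P(v + Z ∈ S) + δ/2. -/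
open MeasureTheory

/-- The probability mass function of the truncated double geometric
distribution `TDGeo(ε', B)`: `p(k) = ((1 − e^{−ε'})/(1 + e^{−ε'})) · e^{−ε'·|k|}`
for `|k| ≤ B − 1`, `p(±B) = e^{−ε'·B}/(1 + e^{−ε'})`, and `p(k) = 0` for `|k| > B`. -/
noncomputable def tdgeo (ε' : ℝ) (B : ℕ) (k : ℤ) : ℝ :=
  if |k| < (B : ℤ) then
    ((1 - Real.exp (-ε')) / (1 + Real.exp (-ε'))) * Real.exp (-ε' * |(k : ℝ)|)
  else if |k| = (B : ℤ) then Real.exp (-ε' * (B : ℝ)) / (1 + Real.exp (-ε'))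
  else 0


lemma tdgeo_nonneg {ε' : ℝ} (hε' : 0 < ε') (B : ℕ) (k : ℤ) : 0 ≤ tdgeo ε' B k := by
  have h1 : Real.exp (-ε') ≤ 1 := Real.exp_le_one_iff.mpr (by linarith)
  have h0 : 0 < Real.exp (-ε') := Real.exp_pos _
  unfold tdgeo
  split_ifs with h h'
  · exact mul_nonneg (div_nonneg (by linarith) (by linarith)) (Real.exp_pos _).le
  · positivity
  · exact le_rfl

lemma tdgeo_key {ε' : ℝ} (hε' : 0 < ε') (B : ℕ) {j m : ℤ}
    (hj : |j| ≠ (B : ℤ)) (hm : |m| ≤ |j| + 1) :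
    tdgeo ε' B j ≤ Real.exp ε' * tdgeo ε' B m := by
  have hq0 : 0 < Real.exp (-ε') := Real.exp_pos _
  have hq1 : Real.exp (-ε') < 1 := Real.exp_lt_one_iff.mpr (by linarith)
  have hnn := tdgeo_nonneg hε' B m
  rcases lt_trichotomy |j| (B : ℤ) with hlt | heq | hgt
  · rcases lt_trichotomy |m| (B : ℤ) with hmlt | hmeq | hmgt
    · unfold tdgeo
      rw [if_pos hlt, if_pos hmlt]
      have hjr : |(j : ℝ)| = ((|j| : ℤ) : ℝ) := by push_cast; ring
      have hmr : |(m : ℝ)| = ((|m| : ℤ) : ℝ) := by push_cast; ring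
      have hmc : ((|m| : ℤ) : ℝ) ≤ ((|j| : ℤ) : ℝ) + 1 := by exact_mod_cast hm
      have hC : 0 ≤ (1 - Real.exp (-ε')) / (1 + Real.exp (-ε')) :=
        div_nonneg (by linarith) (by linarith)
      calc ((1 - Real.exp (-ε')) / (1 + Real.exp (-ε'))) * Real.exp (-ε' * |(j:ℝ)|)
          ≤ ((1 - Real.exp (-ε')) / (1 + Real.exp (-ε'))) *
            (Real.exp ε' * Real.exp (-ε' * |(m:ℝ)|)) := by
            apply mul_le_mul_of_nonneg_left _ hC
            rw [← Real.exp_add]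
            apply Real.exp_le_exp.2
            rw [hjr, hmr]
            nlinarith
        _ = Real.exp ε' * (((1 - Real.exp (-ε')) / (1 + Real.exp (-ε'))) *
            Real.exp (-ε' * |(m:ℝ)|)) := by ring
    · have h1 : |j| ≤ (B : ℤ) - 1 := by omega
      have hjB : |j| = (B : ℤ) - 1 := le_antisymm h1 (by linarith)
      unfold tdgeo
      rw [if_pos hlt, if_neg (by omega), if_pos hmeq]
      have hjr : |(j : ℝ)| = (B : ℝ) - 1 := by
        rw [← Int.cast_abs, hjB]; push_cast; ring
      rw [hjr]
      have hexp : Real.exp ε' * (Real.exp (-ε' * (B:ℝ)) / (1 + Real.exp (-ε')))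
          = Real.exp (-ε' * ((B:ℝ) - 1)) / (1 + Real.exp (-ε')) := by
        rw [mul_div_assoc', ← Real.exp_add]; ring_nf
      rw [hexp, div_mul_eq_mul_div, div_le_div_iff_of_pos_right (by linarith)]
      nlinarith [Real.exp_pos (-ε' * ((B:ℝ) - 1))]
    · linarith
  · exact absurd heq hj
  · have : tdgeo ε' B j = 0 := by
      unfold tdgeo; rw [if_neg (by omega), if_neg (by omega)]
    rw [this]
    positivity

lemma tdgeo_boundary {ε' : ℝ} (hε' : 0 < ε') (B : ℕ) {k : ℤ} (hk : |k| = (B : ℤ)) :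
    tdgeo ε' B k ≤ Real.exp (-ε' * (B : ℝ)) := by
  unfold tdgeo
  rw [if_neg (by omega), if_pos hk]
  exact div_le_self (Real.exp_pos _).le (by nlinarith [Real.exp_pos (-ε')])

lemma measure_preimage_eq {Ω : Type*} [MeasurableSpace Ω] (P : Measure Ω) (Z : Ω → ℤ)
    (hmeas : Measurable Z) (f : ℤ → ENNReal) (hlaw : ∀ k, P {ω | Z ω = k} = f k)
    (T : Set ℤ) : P {ω | Z ω ∈ T} = ∑' k, T.indicator f k := by
  have h : {ω | Z ω ∈ T} = ⋃ k ∈ T, {ω | Z ω = k} := by ext ω; simp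
  rw [h, measure_biUnion T.to_countable ?_ ?_]
  · rw [← tsum_subtype]
    exact tsum_congr fun k => hlaw k
  · intro i _ j _ hij
    simp only [Set.disjoint_left]
    rintro ω hi hj
    simp only [Set.mem_setOf_eq] at hi hj
    exact hij (hi ▸ hj)
  · intro k _
    exact hmeas (measurableSet_singleton k)

lemma sum_le_aux {E c : ENNReal} (g h b : ℤ → ENNReal)
    (hpt : ∀ k, g k ≤ E * h k + b k) (hb : ∑' k, b k ≤ c) :
    ∑' k, g k ≤ E * ∑' k, h k + c := by
  calc ∑' k, g k ≤ ∑' k, (E * h k + b k) := ENNReal.tsum_le_tsum hpt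
    _ = E * ∑' k, h k + ∑' k, b k := by rw [ENNReal.tsum_add, ENNReal.tsum_mul_left]
    _ ≤ _ := add_le_add le_rfl hb

theorem tdgeo_shift_dp
    (ε : ℝ) (hε : 0 < ε) (δ : ℝ) (hδ : δ ∈ Set.Ioc (0 : ℝ) 1)
    (B : ℕ) (hBpos : 0 < B) (hB : (2 / ε) * Real.log (4 / δ) + 1 ≤ (B : ℝ))
    (Ω : Type*) [MeasurableSpace Ω] (P : Measure Ω) [IsProbabilityMeasure P]
    (Z : Ω → ℤ) (hmeas : Measurable Z)
    (hlaw : ∀ k : ℤ, P {ω | Z ω = k} = ENNReal.ofReal (tdgeo (ε / 2) B k)) :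
    ∀ (v : ℤ) (S : Set ℤ),
      P {ω | v + Z ω ∈ S}
          ≤ ENNReal.ofReal (Real.exp (ε / 2)) * P {ω | (v - 1) + Z ω ∈ S}
            + ENNReal.ofReal (δ / 2) ∧
      P {ω | (v - 1) + Z ω ∈ S}
          ≤ ENNReal.ofReal (Real.exp (ε / 2)) * P {ω | v + Z ω ∈ S}
            + ENNReal.ofReal (δ / 2) := by
  intro v S
  have hδ0 : 0 < δ := hδ.1
  have hε2 : 0 < ε / 2 := by linarith
  set f : ℤ → ENNReal := fun k => ENNReal.ofReal (tdgeo (ε / 2) B k) with hfdef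
  -- log bound
  have hL : Real.log (4 / δ) ≤ ε / 2 * (B : ℝ) := by
    have h0 : ε / 2 * (2 / ε * Real.log (4 / δ)) = Real.log (4 / δ) := by
      field_simp
    have h5 := mul_le_mul_of_nonneg_left
      (show 2 / ε * Real.log (4 / δ) ≤ (B : ℝ) - 1 by linarith) hε2.le
    nlinarith
  have hbd : ∀ k : ℤ, |k| = (B : ℤ) → f k ≤ ENNReal.ofReal (δ / 4) := by
    intro k hk
    apply ENNReal.ofReal_le_ofReal
    calc tdgeo (ε / 2) B k ≤ Real.exp (-(ε / 2) * (B : ℝ)) := tdgeo_boundary hε2 B hk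
      _ ≤ Real.exp (-Real.log (4 / δ)) := Real.exp_le_exp.2 (by linarith)
      _ = δ / 4 := by
          rw [Real.exp_neg, Real.exp_log (by positivity), inv_div]
  have key : ∀ j m : ℤ, |j| ≠ (B : ℤ) → |m| ≤ |j| + 1 →
      f j ≤ ENNReal.ofReal (Real.exp (ε / 2)) * f m := by
    intro j m h1 h2
    rw [hfdef]
    simp only
    rw [← ENNReal.ofReal_mul (Real.exp_pos _).le]
    exact ENNReal.ofReal_le_ofReal (tdgeo_key hε2 B h1 h2)
  have hA : ∀ T : Set ℤ, P {ω | Z ω ∈ T} = ∑' k, T.indicator f k :=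
    measure_preimage_eq P Z hmeas f hlaw
  set T : Set ℤ := {k | v + k ∈ S} with hT
  have e1 : P {ω | v + Z ω ∈ S} = ∑' k, T.indicator f k := hA T
  have e2 : P {ω | (v - 1) + Z ω ∈ S}
      = ∑' k, T.indicator (fun j => f (j + 1)) k := by
    rw [show {ω | (v - 1) + Z ω ∈ S} = {ω | Z ω ∈ {k | (v - 1) + k ∈ S}} from rfl,
      hA {k | (v - 1) + k ∈ S},
      ← Equiv.tsum_eq (Equiv.addRight (1 : ℤ)) (Set.indicator {k | (v - 1) + k ∈ S} f)]
    apply tsum_congr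
    intro k
    have h3 : v - 1 + (k + 1) = v + k := by ring
    simp only [Equiv.coe_addRight]
    have hmem : k + 1 ∈ {k | v - 1 + k ∈ S} ↔ k ∈ T := by
      simp only [Set.mem_setOf_eq, hT, h3]
    by_cases hk : k ∈ T
    · rw [Set.indicator_of_mem (hmem.2 hk), Set.indicator_of_mem hk]
    · rw [Set.indicator_of_notMem (fun h => hk (hmem.1 h)),
        Set.indicator_of_notMem hk]
  have habs1 : ∀ k : ℤ, |k + 1| ≤ |k| + 1 := by
    intro k
    calc |k + 1| ≤ |k| + |(1 : ℤ)| := abs_add_le _ _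
      _ = |k| + 1 := by norm_num
  have habs2 : ∀ k : ℤ, |k| ≤ |k + 1| + 1 := by
    intro k
    calc |k| = |(k + 1) + (-1)| := by congr 1; ring
      _ ≤ |k + 1| + |(-1 : ℤ)| := abs_add_le _ _
      _ = |k + 1| + 1 := by norm_num
  have hsumb : ∀ a b : ℤ, (∑' k : ℤ, ((if k = a then ENNReal.ofReal (δ / 4) else 0)
      + (if k = b then ENNReal.ofReal (δ / 4) else 0))) ≤ ENNReal.ofReal (δ / 2) := by
    intro a b
    rw [ENNReal.tsum_add, tsum_ite_eq, tsum_ite_eq,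
      ← ENNReal.ofReal_add (by linarith) (by linarith)]
    apply ENNReal.ofReal_le_ofReal
    linarith
  constructor
  · rw [e1, e2]
    apply sum_le_aux _ _ (fun k => (if k = (B : ℤ) then ENNReal.ofReal (δ / 4) else 0)
      + (if k = -(B : ℤ) then ENNReal.ofReal (δ / 4) else 0)) _ (hsumb _ _)
    intro k
    by_cases hk : k ∈ T
    · rw [Set.indicator_of_mem hk, Set.indicator_of_mem hk]
      by_cases hkB : |k| = (B : ℤ)
      · calc f k ≤ ENNReal.ofReal (δ / 4) := hbd k hkB
          _ ≤ (if k = (B : ℤ) then ENNReal.ofReal (δ / 4) else 0)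
              + (if k = -(B : ℤ) then ENNReal.ofReal (δ / 4) else 0) := by
            rcases (abs_eq (by positivity)).1 hkB with h | h
            · rw [if_pos h]; exact le_self_add
            · rw [if_pos h]; exact le_add_self
          _ ≤ _ := le_add_self
      · exact (key k (k + 1) hkB (habs1 k)).trans le_self_add
    · simp [Set.indicator_of_notMem hk]
  · rw [e1, e2]
    apply sum_le_aux _ _ (fun k => (if k = (B : ℤ) - 1 then ENNReal.ofReal (δ / 4) else 0)
      + (if k = -(B : ℤ) - 1 then ENNReal.ofReal (δ / 4) else 0)) _ (hsumb _ _)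
    intro k
    by_cases hk : k ∈ T
    · rw [Set.indicator_of_mem hk, Set.indicator_of_mem hk]
      by_cases hkB : |k + 1| = (B : ℤ)
      · calc f (k + 1) ≤ ENNReal.ofReal (δ / 4) := hbd (k + 1) hkB
          _ ≤ (if k = (B : ℤ) - 1 then ENNReal.ofReal (δ / 4) else 0)
              + (if k = -(B : ℤ) - 1 then ENNReal.ofReal (δ / 4) else 0) := by
            rcases (abs_eq (by positivity)).1 hkB with h | h
            · rw [if_pos (by omega : k = (B : ℤ) - 1)]; exact le_self_add
            · rw [if_pos (by omega : k = -(B : ℤ) - 1)]; exact le_add_self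
          _ ≤ _ := le_add_self
      · exact (key (k + 1) k hkB (habs2 k)).trans le_self_add
    · simp [Set.indicator_of_notMem hk]
end
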